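/- For every α > 0, every sequence x : ℕ₊ → ℂ, and every n ≥ 1, the tridiagonal action of J_α factorises as follows: setting y(m) = m^(α+1/2) x(m), one has (J_α x)(n) = n^(α+1/2)·( c_α(n)·(y(n) − y(n−1)) − c_α(n+1)·(y(n+1) − y(n)) ) for n ≥ 2, and (J_α x)(1) = c_α(1)·y(1) − c_α(2)·(y(2) − y(1)); that is, J_α = D(n^(α+1/2})(I − S*) D(c_α) (I − S) D(n^(α+1/2)) where S is the unilateral right shift and D(γ) denotes the diagonal operator with entries γ(n). -/

import Mathlib

/-- Off-diagonal Jacobi parameter `a_α(x) = x^(α+1/2) (x+1)^(α+1/2) / (x^(2α) - (x+1)^(2α))`. -/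
noncomputable def aJ (α x : ℝ) : ℝ :=
  (x ^ (α + 1/2) * (x + 1) ^ (α + 1/2)) / (x ^ (2 * α) - (x + 1) ^ (2 * α))

/-- Diagonal Jacobi parameter
`b_α(x) = x^(2α+1)((x+1)^(2α) - (x-1)^(2α)) / (((x+1)^(2α) - x^(2α))(x^(2α) - (x-1)^(2α)))`. -/
noncomputable def bJ (α x : ℝ) : ℝ :=
  (x ^ (2 * α + 1) * ((x + 1) ^ (2 * α) - (x - 1) ^ (2 * α))) /
    (((x + 1) ^ (2 * α) - x ^ (2 * α)) * (x ^ (2 * α) - (x - 1) ^ (2 * α)))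

/-- `c_α(x) = 1/(x^(2α) - (x-1)^(2α))`. -/
noncomputable def cJ (α x : ℝ) : ℝ := 1 / (x ^ (2 * α) - (x - 1) ^ (2 * α))

lemma rpow_mono (α : ℝ) (hα : 0 < α) {s t : ℝ} (hs : 0 ≤ s) (hst : s < t) :
    s ^ (2*α) < t ^ (2*α) :=
  Real.rpow_lt_rpow hs hst (by linarith)

lemma key_a1 (α t : ℝ) (hα : 0 < α) (ht : 1 ≤ t) :
    aJ α (t - 1) = -(t ^ (α + 1/2) * (t - 1) ^ (α + 1/2)) * cJ α t := by
  have h : (t-1) ^ (2*α) < t ^ (2*α) := rpow_mono α hα (by linarith) (by linarith)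
  have hd : (t-1) ^ (2*α) - t ^ (2*α) ≠ 0 := by linarith
  have hd' : t ^ (2*α) - (t-1) ^ (2*α) ≠ 0 := by linarith
  rw [aJ, cJ, show t - 1 + 1 = t by ring]
  rw [show (t-1) ^ (2*α) - t ^ (2*α) = -(t ^ (2*α) - (t-1) ^ (2*α)) by ring]
  field_simp

lemma key_a2 (α t : ℝ) (hα : 0 < α) (ht : 0 ≤ t) :
    aJ α t = -(t ^ (α + 1/2) * (t + 1) ^ (α + 1/2)) * cJ α (t + 1) := by
  have h : t ^ (2*α) < (t+1) ^ (2*α) := rpow_mono α hα ht (by linarith)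
  have hd : t ^ (2*α) - (t+1) ^ (2*α) ≠ 0 := by linarith
  have hd' : (t+1) ^ (2*α) - t ^ (2*α) ≠ 0 := by linarith
  rw [aJ, cJ, show t + 1 - 1 = t by ring]
  rw [show t ^ (2*α) - (t+1) ^ (2*α) = -((t+1) ^ (2*α) - t ^ (2*α)) by ring]
  field_simp

lemma key_b (α t : ℝ) (hα : 0 < α) (ht : 1 ≤ t) :
    bJ α t = t ^ (2*α+1) * (cJ α t + cJ α (t + 1)) := by
  have h1 : (t-1) ^ (2*α) < t ^ (2*α) := rpow_mono α hα (by linarith) (by linarith)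
  have h2 : t ^ (2*α) < (t+1) ^ (2*α) := rpow_mono α hα (by linarith) (by linarith)
  have hd1 : t ^ (2*α) - (t-1) ^ (2*α) ≠ 0 := by linarith
  have hd2 : (t+1) ^ (2*α) - t ^ (2*α) ≠ 0 := by linarith
  rw [bJ, cJ, cJ, show t + 1 - 1 = t by ring]
  field_simp
  ring_nf

lemma key_sq (α t : ℝ) (ht : 0 < t) :
    t ^ (2*α+1) = t ^ (α + 1/2) * t ^ (α + 1/2) := by
  rw [← Real.rpow_add ht]; norm_num; ring_nf

/-- Factorisation of the tridiagonal action of `J_α`: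
with `y(m) = m^(α+1/2) x(m)`, one has, for `n ≥ 2`,
`(J_α x)(n) = n^(α+1/2) (c_α(n)(y(n)-y(n-1)) - c_α(n+1)(y(n+1)-y(n)))`,
and `(J_α x)(1) = c_α(1) y(1) - c_α(2)(y(2)-y(1))`; that is,
`J_α = D(n^(α+1/2))(I-S*) D(c_α) (I-S) D(n^(α+1/2))`. -/
theorem jacobi_factorisation (α : ℝ) (hα : 0 < α) (x y : ℕ+ → ℂ)
    (hy : ∀ m : ℕ+, y m = (((m : ℝ) ^ (α + 1/2) : ℝ) : ℂ) * x m) :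
    (∀ n : ℕ+, 2 ≤ n →
      (aJ α ((n : ℝ) - 1) : ℂ) * x (n - 1) + (bJ α (n : ℝ) : ℂ) * x n
          + (aJ α (n : ℝ) : ℂ) * x (n + 1)
        = (((n : ℝ) ^ (α + 1/2) : ℝ) : ℂ) *
            ((cJ α (n : ℝ) : ℂ) * (y n - y (n - 1))
              - (cJ α ((n : ℝ) + 1) : ℂ) * (y (n + 1) - y n))) ∧
    (bJ α 1 : ℂ) * x 1 + (aJ α 1 : ℂ) * x 2
      = (cJ α 1 : ℂ) * y 1 - (cJ α 2 : ℂ) * (y 2 - y 1) := by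
  constructor
  · intro n hn
    have hn1 : 1 ≤ (n : ℝ) := by exact_mod_cast n.one_le
    have hn2 : (2:ℝ) ≤ (n : ℝ) := by exact_mod_cast hn
    have hsub : ((n - 1 : ℕ+) : ℝ) = (n : ℝ) - 1 := by
      have h1 : (1:ℕ+) < n := hn
      have h2 : ((n - 1 : ℕ+) : ℕ) = (n : ℕ) - 1 := by
        rw [PNat.sub_coe, if_pos h1, PNat.one_coe]
      have h3 : (1:ℕ) ≤ (n:ℕ) := n.one_le
      rw [show ((n - 1 : ℕ+) : ℝ) = (((n - 1 : ℕ+) : ℕ) : ℝ) from rfl, h2,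
        Nat.cast_sub h3]
      simp
    have hadd : ((n + 1 : ℕ+) : ℝ) = (n : ℝ) + 1 := by push_cast; ring
    rw [hy n, hy (n-1), hy (n+1), hsub, hadd]
    rw [key_a1 α n hα hn1, key_a2 α n hα (by linarith), key_b α n hα hn1,
      key_sq α n (by linarith)]
    push_cast
    ring
  · have h2α : 2*α ≠ 0 := by positivity
    have h2 : (1:ℝ) < 2 ^ (2*α) := by
      have := rpow_mono α hα (s := 1) (t := 2) (by norm_num) (by norm_num)
      rwa [Real.one_rpow] at this
    have e1 : bJ α 1 = 2^(2*α)/(2^(2*α)-1) := by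
      rw [bJ]; norm_num [Real.one_rpow, Real.zero_rpow h2α]
    have e2 : aJ α 1 = 2^(α+1/2)/(1-2^(2*α)) := by
      rw [aJ]; norm_num [Real.one_rpow]
    have e3 : cJ α 1 = 1 := by
      rw [cJ]; norm_num [Real.one_rpow, Real.zero_rpow h2α]
    have e4 : cJ α 2 = 1/(2^(2*α)-1) := by
      rw [cJ]; norm_num [Real.one_rpow]
    have hc1 : ((1:ℕ+):ℝ) = 1 := by norm_num
    have hc2 : ((2:ℕ+):ℝ) = 2 := by norm_num
    rw [hy 1, hy 2, hc1, hc2, e1, e2, e3, e4, Real.one_rpow]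
    have hne : (((2:ℝ)^(2*α) : ℝ) : ℂ) - 1 ≠ 0 := by
      intro h
      have h' : (((2:ℝ)^(2*α) : ℝ) : ℂ) = 1 := sub_eq_zero.mp h
      have : (2:ℝ)^(2*α) = 1 := by exact_mod_cast h'
      linarith
    have hne2 : (1:ℂ) - (((2:ℝ)^(2*α) : ℝ) : ℂ) ≠ 0 := by
      intro h; apply hne; linear_combination -h
    push_cast
    field_simp
    ring
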